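/- Let t, ρ : ℝ → ℝ be twice differentiable functions of τ satisfying t''·cosh²ρ + 2 t' ρ' sinh ρ cosh ρ = 0, ρ'' + sinh ρ cosh ρ·(t'² + 1) = 0, and ρ'² − t'²cosh²ρ + sinh²ρ = 0. Define Y : ℝ² → ℝ^8 by Y(τ,σ) = 2(cosh ρ(τ) cos t(τ), 0, 0, sinh ρ(τ) cos σ, 0, sinh ρ(τ) sin σ, 0, cosh ρ(τ) sin t(τ)). Then Y together with Λ(τ,σ) := −2 sinh²ρ(τ) satisfies the conformal-gauge string system on AdS₇ of radius ℓ = 2 (with p = 5); in particular the induced multiplier is Λ̃ = η(∂σY,∂σY) = 4 sinh²ρ. -/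
import Mathlib


noncomputable section

open Real

/-- Sign of the AdS embedding metric η = diag(−1, 1, …, 1, −1) on ℝ^{p+3}. -/
def etaSign (p : ℕ) (μ : Fin (p + 3)) : ℝ :=
  if μ.val = 0 ∨ μ.val = p + 2 then -1 else 1

/-- The AdS embedding bilinear form η(u,v) = −u₀v₀ + u₁v₁ + ⋯ + u_{p+1}v_{p+1} − u_{p+2}v_{p+2}. -/
def etaForm (p : ℕ) (u v : Fin (p + 3) → ℝ) : ℝ :=
  ∑ μ, etaSign p μ * u μ * v μ

/-- The conformal-gauge string system on AdS_{p+2} of radius ℓ. -/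
def IsConformalString (p : ℕ) (ℓ : ℝ) (Y : ℝ → ℝ → Fin (p + 3) → ℝ)
    (Λ : ℝ → ℝ → ℝ) : Prop :=
  (∀ τ σ μ,
    deriv (fun t => deriv (fun t' => Y t' σ μ) t) τ
      - deriv (fun s => deriv (fun s' => Y τ s' μ) s) σ = Λ τ σ * Y τ σ μ) ∧
  (∀ τ σ, etaForm p (Y τ σ) (Y τ σ) = -ℓ ^ 2) ∧
  (∀ τ σ, etaForm p (fun μ => deriv (fun t => Y t σ μ) τ)
      (fun μ => deriv (fun s => Y τ s μ) σ) = 0) ∧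
  (∀ τ σ, etaForm p (fun μ => deriv (fun t => Y t σ μ) τ)
        (fun μ => deriv (fun t => Y t σ μ) τ)
      + etaForm p (fun μ => deriv (fun s => Y τ s μ) σ)
        (fun μ => deriv (fun s => Y τ s μ) σ) = 0)


lemma etaForm_eight (u v : Fin 8 → ℝ) : etaForm 5 u v =
    -(u 0 * v 0) + u 1 * v 1 + u 2 * v 2 + u 3 * v 3 + u 4 * v 4 + u 5 * v 5
      + u 6 * v 6 - u 7 * v 7 := by
  show (∑ μ : Fin 8, etaSign 5 μ * u μ * v μ) = _
  simp only [Fin.sum_univ_eight, etaSign,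
    show ((0:Fin 8):ℕ) = 0 from rfl, show ((1:Fin 8):ℕ) = 1 from rfl,
    show ((2:Fin 8):ℕ) = 2 from rfl, show ((3:Fin 8):ℕ) = 3 from rfl,
    show ((4:Fin 8):ℕ) = 4 from rfl, show ((5:Fin 8):ℕ) = 5 from rfl,
    show ((6:Fin 8):ℕ) = 6 from rfl, show ((7:Fin 8):ℕ) = 7 from rfl]
  norm_num
  ring

/-- The pulsating closed-string ansatz of the stringy membrane solves the
conformal-gauge string system on AdS₇ of radius ℓ = 2, with Λ = −2 sinh²ρ and induced sphere
multiplier Λ̃ = η(∂σY,∂σY) = 4 sinh²ρ. -/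
theorem pulsating_ansatz_is_conformal_string (t ρ : ℝ → ℝ)
    (ht1 : Differentiable ℝ t) (ht2 : Differentiable ℝ (deriv t))
    (hρ1 : Differentiable ℝ ρ) (hρ2 : Differentiable ℝ (deriv ρ))
    (hEoMt : ∀ τ, deriv (deriv t) τ * Real.cosh (ρ τ) ^ 2
      + 2 * deriv t τ * deriv ρ τ * Real.sinh (ρ τ) * Real.cosh (ρ τ) = 0)
    (hEoMρ : ∀ τ, deriv (deriv ρ) τ
      + Real.sinh (ρ τ) * Real.cosh (ρ τ) * ((deriv t τ) ^ 2 + 1) = 0)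
    (hVir : ∀ τ, (deriv ρ τ) ^ 2 - (deriv t τ) ^ 2 * Real.cosh (ρ τ) ^ 2
      + Real.sinh (ρ τ) ^ 2 = 0) :
    IsConformalString 5 2
      (fun τ σ =>
        ![2 * Real.cosh (ρ τ) * Real.cos (t τ),
          0, 0,
          2 * Real.sinh (ρ τ) * Real.cos σ,
          0,
          2 * Real.sinh (ρ τ) * Real.sin σ,
          0,
          2 * Real.cosh (ρ τ) * Real.sin (t τ)])
      (fun τ _ => -2 * Real.sinh (ρ τ) ^ 2) ∧
    (∀ τ σ : ℝ,
      etaForm 5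
        (fun μ => deriv (fun s =>
          (![2 * Real.cosh (ρ τ) * Real.cos (t τ),
             0, 0,
             2 * Real.sinh (ρ τ) * Real.cos s,
             0,
             2 * Real.sinh (ρ τ) * Real.sin s,
             0,
             2 * Real.cosh (ρ τ) * Real.sin (t τ)] : Fin 8 → ℝ) μ) σ)
        (fun μ => deriv (fun s =>
          (![2 * Real.cosh (ρ τ) * Real.cos (t τ),
             0, 0,
             2 * Real.sinh (ρ τ) * Real.cos s,
             0,
             2 * Real.sinh (ρ τ) * Real.sin s,
             0,
             2 * Real.cosh (ρ τ) * Real.sin (t τ)] : Fin 8 → ℝ) μ) σ)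
      = 4 * Real.sinh (ρ τ) ^ 2) := by
  have hd0 : (deriv fun τ => 2 * Real.cosh (ρ τ) * Real.cos (t τ)) = fun τ =>
      2 * (deriv ρ τ * Real.sinh (ρ τ) * Real.cos (t τ)
        - deriv t τ * Real.cosh (ρ τ) * Real.sin (t τ)) := by
    funext x
    exact ((HasDerivAt.const_mul 2 (hρ1 x).hasDerivAt.cosh).mul
      (ht1 x).hasDerivAt.cos).deriv.trans (by ring)
  have hd7 : (deriv fun τ => 2 * Real.cosh (ρ τ) * Real.sin (t τ)) = fun τ =>
      2 * (deriv ρ τ * Real.sinh (ρ τ) * Real.sin (t τ)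
        + deriv t τ * Real.cosh (ρ τ) * Real.cos (t τ)) := by
    funext x
    exact ((HasDerivAt.const_mul 2 (hρ1 x).hasDerivAt.cosh).mul
      (ht1 x).hasDerivAt.sin).deriv.trans (by ring)
  have hd3 : ∀ k : ℝ, (deriv fun τ => 2 * Real.sinh (ρ τ) * k) = fun τ =>
      2 * deriv ρ τ * Real.cosh (ρ τ) * k := by
    intro k; funext x
    exact ((HasDerivAt.const_mul 2 (hρ1 x).hasDerivAt.sinh).mul_const k).deriv.trans (by ring)
  have hσc : ∀ C : ℝ, (deriv fun s : ℝ => C * Real.cos s) = fun s => C * -Real.sin s := by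
    intro C; funext x; exact ((Real.hasDerivAt_cos x).const_mul C).deriv
  have hσs : ∀ C : ℝ, (deriv fun s : ℝ => C * Real.sin s) = fun s => C * Real.cos s := by
    intro C; funext x; exact ((Real.hasDerivAt_sin x).const_mul C).deriv
  have hσns : ∀ C : ℝ, (deriv fun s : ℝ => C * -Real.sin s) = fun s => C * -Real.cos s := by
    intro C; funext x; exact (((Real.hasDerivAt_sin x).neg).const_mul C).deriv
  have ht'' : ∀ τ, deriv (deriv t) τ * Real.cosh (ρ τ)
      + 2 * deriv t τ * deriv ρ τ * Real.sinh (ρ τ) = 0 := by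
    intro τ
    exact (mul_eq_zero.mp (show Real.cosh (ρ τ) * (deriv (deriv t) τ * Real.cosh (ρ τ)
      + 2 * deriv t τ * deriv ρ τ * Real.sinh (ρ τ)) = 0 by
        linear_combination hEoMt τ)).resolve_left (Real.cosh_pos (ρ τ)).ne'
  have hdd0 : ∀ τ, HasDerivAt (fun τ =>
      2 * (deriv ρ τ * Real.sinh (ρ τ) * Real.cos (t τ)
        - deriv t τ * Real.cosh (ρ τ) * Real.sin (t τ)))
      (2 * ((deriv (deriv ρ) τ * Real.sinh (ρ τ) + deriv ρ τ * (Real.cosh (ρ τ) * deriv ρ τ))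
          * Real.cos (t τ)
        + deriv ρ τ * Real.sinh (ρ τ) * (-Real.sin (t τ) * deriv t τ)
        - ((deriv (deriv t) τ * Real.cosh (ρ τ) + deriv t τ * (Real.sinh (ρ τ) * deriv ρ τ))
            * Real.sin (t τ)
          + deriv t τ * Real.cosh (ρ τ) * (Real.cos (t τ) * deriv t τ)))) τ := fun τ =>
    HasDerivAt.const_mul 2
      ((((hρ2 τ).hasDerivAt.mul (hρ1 τ).hasDerivAt.sinh).mul (ht1 τ).hasDerivAt.cos).sub
        (((ht2 τ).hasDerivAt.mul (hρ1 τ).hasDerivAt.cosh).mul (ht1 τ).hasDerivAt.sin))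
  have hdd7 : ∀ τ, HasDerivAt (fun τ =>
      2 * (deriv ρ τ * Real.sinh (ρ τ) * Real.sin (t τ)
        + deriv t τ * Real.cosh (ρ τ) * Real.cos (t τ)))
      (2 * ((deriv (deriv ρ) τ * Real.sinh (ρ τ) + deriv ρ τ * (Real.cosh (ρ τ) * deriv ρ τ))
          * Real.sin (t τ)
        + deriv ρ τ * Real.sinh (ρ τ) * (Real.cos (t τ) * deriv t τ)
        + ((deriv (deriv t) τ * Real.cosh (ρ τ) + deriv t τ * (Real.sinh (ρ τ) * deriv ρ τ))
            * Real.cos (t τ)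
          + deriv t τ * Real.cosh (ρ τ) * (-Real.sin (t τ) * deriv t τ)))) τ := fun τ =>
    HasDerivAt.const_mul 2
      ((((hρ2 τ).hasDerivAt.mul (hρ1 τ).hasDerivAt.sinh).mul (ht1 τ).hasDerivAt.sin).add
        (((ht2 τ).hasDerivAt.mul (hρ1 τ).hasDerivAt.cosh).mul (ht1 τ).hasDerivAt.cos))
  have hdd3 : ∀ (τ k : ℝ), HasDerivAt (fun τ => 2 * deriv ρ τ * Real.cosh (ρ τ) * k)
      ((2 * deriv (deriv ρ) τ * Real.cosh (ρ τ)
        + 2 * deriv ρ τ * (Real.sinh (ρ τ) * deriv ρ τ)) * k) τ := fun τ k =>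
    ((HasDerivAt.const_mul 2 (hρ2 τ).hasDerivAt).mul (hρ1 τ).hasDerivAt.cosh).mul_const k
  refine ⟨⟨?_, ?_, ?_, ?_⟩, ?_⟩
  · -- equations of motion
    intro τ σ μ
    fin_cases μ
    · show deriv (fun τ' => deriv (fun t' => 2 * Real.cosh (ρ t') * Real.cos (t t')) τ') τ
          - deriv (fun s => deriv (fun _ : ℝ => 2 * Real.cosh (ρ τ) * Real.cos (t τ)) s) σ
        = -2 * Real.sinh (ρ τ) ^ 2 * (2 * Real.cosh (ρ τ) * Real.cos (t τ))
      simp only [hd0, deriv_const']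
      rw [(hdd0 τ).deriv]
      linear_combination (2 * Real.sinh (ρ τ) * Real.cos (t τ)) * hEoMρ τ
        + (-2 * Real.sin (t τ)) * ht'' τ
        + (2 * Real.cosh (ρ τ) * Real.cos (t τ)) * hVir τ
        + (2 * (deriv t τ) ^ 2 * Real.cosh (ρ τ) * Real.cos (t τ))
            * Real.cosh_sq_sub_sinh_sq (ρ τ)
    · show deriv (fun τ' => deriv (fun _ : ℝ => (0:ℝ)) τ') τ
          - deriv (fun s => deriv (fun _ : ℝ => (0:ℝ)) s) σ
        = -2 * Real.sinh (ρ τ) ^ 2 * 0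
      simp
    · show deriv (fun τ' => deriv (fun _ : ℝ => (0:ℝ)) τ') τ
          - deriv (fun s => deriv (fun _ : ℝ => (0:ℝ)) s) σ
        = -2 * Real.sinh (ρ τ) ^ 2 * 0
      simp
    · show deriv (fun τ' => deriv (fun t' => 2 * Real.sinh (ρ t') * Real.cos σ) τ') τ
          - deriv (fun s => deriv (fun s' => 2 * Real.sinh (ρ τ) * Real.cos s') s) σ
        = -2 * Real.sinh (ρ τ) ^ 2 * (2 * Real.sinh (ρ τ) * Real.cos σ)
      simp only [hd3, hσc, hσns]
      rw [(hdd3 τ (Real.cos σ)).deriv]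
      linear_combination (2 * Real.cosh (ρ τ) * Real.cos σ) * hEoMρ τ
        + (2 * Real.sinh (ρ τ) * Real.cos σ) * hVir τ
        + (-2 * Real.sinh (ρ τ) * Real.cos σ) * Real.cosh_sq_sub_sinh_sq (ρ τ)
    · show deriv (fun τ' => deriv (fun _ : ℝ => (0:ℝ)) τ') τ
          - deriv (fun s => deriv (fun _ : ℝ => (0:ℝ)) s) σ
        = -2 * Real.sinh (ρ τ) ^ 2 * 0
      simp
    · show deriv (fun τ' => deriv (fun t' => 2 * Real.sinh (ρ t') * Real.sin σ) τ') τ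
          - deriv (fun s => deriv (fun s' => 2 * Real.sinh (ρ τ) * Real.sin s') s) σ
        = -2 * Real.sinh (ρ τ) ^ 2 * (2 * Real.sinh (ρ τ) * Real.sin σ)
      simp only [hd3, hσs, hσc]
      rw [(hdd3 τ (Real.sin σ)).deriv]
      linear_combination (2 * Real.cosh (ρ τ) * Real.sin σ) * hEoMρ τ
        + (2 * Real.sinh (ρ τ) * Real.sin σ) * hVir τ
        + (-2 * Real.sinh (ρ τ) * Real.sin σ) * Real.cosh_sq_sub_sinh_sq (ρ τ)
    · show deriv (fun τ' => deriv (fun _ : ℝ => (0:ℝ)) τ') τ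
          - deriv (fun s => deriv (fun _ : ℝ => (0:ℝ)) s) σ
        = -2 * Real.sinh (ρ τ) ^ 2 * 0
      simp
    · show deriv (fun τ' => deriv (fun t' => 2 * Real.cosh (ρ t') * Real.sin (t t')) τ') τ
          - deriv (fun s => deriv (fun _ : ℝ => 2 * Real.cosh (ρ τ) * Real.sin (t τ)) s) σ
        = -2 * Real.sinh (ρ τ) ^ 2 * (2 * Real.cosh (ρ τ) * Real.sin (t τ))
      simp only [hd7, deriv_const']
      rw [(hdd7 τ).deriv]
      linear_combination (2 * Real.sinh (ρ τ) * Real.sin (t τ)) * hEoMρ τ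
        + (2 * Real.cos (t τ)) * ht'' τ
        + (2 * Real.cosh (ρ τ) * Real.sin (t τ)) * hVir τ
        + (2 * (deriv t τ) ^ 2 * Real.cosh (ρ τ) * Real.sin (t τ))
            * Real.cosh_sq_sub_sinh_sq (ρ τ)
  · -- η(Y,Y) = -ℓ²
    intro τ σ
    rw [etaForm_eight]
    show -(2 * Real.cosh (ρ τ) * Real.cos (t τ) * (2 * Real.cosh (ρ τ) * Real.cos (t τ)))
        + 0 * 0 + 0 * 0
        + 2 * Real.sinh (ρ τ) * Real.cos σ * (2 * Real.sinh (ρ τ) * Real.cos σ)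
        + 0 * 0
        + 2 * Real.sinh (ρ τ) * Real.sin σ * (2 * Real.sinh (ρ τ) * Real.sin σ)
        + 0 * 0
        - 2 * Real.cosh (ρ τ) * Real.sin (t τ) * (2 * Real.cosh (ρ τ) * Real.sin (t τ))
      = -2 ^ 2
    linear_combination (-4 * Real.cosh (ρ τ) ^ 2) * Real.sin_sq_add_cos_sq (t τ)
      + (4 * Real.sinh (ρ τ) ^ 2) * Real.sin_sq_add_cos_sq σ
      + (-4) * Real.cosh_sq_sub_sinh_sq (ρ τ)
  · -- η(∂τY, ∂σY) = 0
    intro τ σ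
    rw [etaForm_eight]
    show -(deriv (fun t' => 2 * Real.cosh (ρ t') * Real.cos (t t')) τ
          * deriv (fun _ : ℝ => 2 * Real.cosh (ρ τ) * Real.cos (t τ)) σ)
        + deriv (fun _ : ℝ => (0:ℝ)) τ * deriv (fun _ : ℝ => (0:ℝ)) σ
        + deriv (fun _ : ℝ => (0:ℝ)) τ * deriv (fun _ : ℝ => (0:ℝ)) σ
        + deriv (fun t' => 2 * Real.sinh (ρ t') * Real.cos σ) τ
          * deriv (fun s' => 2 * Real.sinh (ρ τ) * Real.cos s') σ
        + deriv (fun _ : ℝ => (0:ℝ)) τ * deriv (fun _ : ℝ => (0:ℝ)) σ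
        + deriv (fun t' => 2 * Real.sinh (ρ t') * Real.sin σ) τ
          * deriv (fun s' => 2 * Real.sinh (ρ τ) * Real.sin s') σ
        + deriv (fun _ : ℝ => (0:ℝ)) τ * deriv (fun _ : ℝ => (0:ℝ)) σ
        - deriv (fun t' => 2 * Real.cosh (ρ t') * Real.sin (t t')) τ
          * deriv (fun _ : ℝ => 2 * Real.cosh (ρ τ) * Real.sin (t τ)) σ
      = 0
    simp only [hd0, hd7, hd3, hσc, hσs, deriv_const']
    ring
  · -- η(∂τY,∂τY) + η(∂σY,∂σY) = 0
    intro τ σ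
    rw [etaForm_eight, etaForm_eight]
    show (-(deriv (fun t' => 2 * Real.cosh (ρ t') * Real.cos (t t')) τ
          * deriv (fun t' => 2 * Real.cosh (ρ t') * Real.cos (t t')) τ)
        + deriv (fun _ : ℝ => (0:ℝ)) τ * deriv (fun _ : ℝ => (0:ℝ)) τ
        + deriv (fun _ : ℝ => (0:ℝ)) τ * deriv (fun _ : ℝ => (0:ℝ)) τ
        + deriv (fun t' => 2 * Real.sinh (ρ t') * Real.cos σ) τ
          * deriv (fun t' => 2 * Real.sinh (ρ t') * Real.cos σ) τ
        + deriv (fun _ : ℝ => (0:ℝ)) τ * deriv (fun _ : ℝ => (0:ℝ)) τ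
        + deriv (fun t' => 2 * Real.sinh (ρ t') * Real.sin σ) τ
          * deriv (fun t' => 2 * Real.sinh (ρ t') * Real.sin σ) τ
        + deriv (fun _ : ℝ => (0:ℝ)) τ * deriv (fun _ : ℝ => (0:ℝ)) τ
        - deriv (fun t' => 2 * Real.cosh (ρ t') * Real.sin (t t')) τ
          * deriv (fun t' => 2 * Real.cosh (ρ t') * Real.sin (t t')) τ)
      + (-(deriv (fun _ : ℝ => 2 * Real.cosh (ρ τ) * Real.cos (t τ)) σ
          * deriv (fun _ : ℝ => 2 * Real.cosh (ρ τ) * Real.cos (t τ)) σ)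
        + deriv (fun _ : ℝ => (0:ℝ)) σ * deriv (fun _ : ℝ => (0:ℝ)) σ
        + deriv (fun _ : ℝ => (0:ℝ)) σ * deriv (fun _ : ℝ => (0:ℝ)) σ
        + deriv (fun s' => 2 * Real.sinh (ρ τ) * Real.cos s') σ
          * deriv (fun s' => 2 * Real.sinh (ρ τ) * Real.cos s') σ
        + deriv (fun _ : ℝ => (0:ℝ)) σ * deriv (fun _ : ℝ => (0:ℝ)) σ
        + deriv (fun s' => 2 * Real.sinh (ρ τ) * Real.sin s') σ
          * deriv (fun s' => 2 * Real.sinh (ρ τ) * Real.sin s') σ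
        + deriv (fun _ : ℝ => (0:ℝ)) σ * deriv (fun _ : ℝ => (0:ℝ)) σ
        - deriv (fun _ : ℝ => 2 * Real.cosh (ρ τ) * Real.sin (t τ)) σ
          * deriv (fun _ : ℝ => 2 * Real.cosh (ρ τ) * Real.sin (t τ)) σ)
      = 0
    simp only [hd0, hd7, hd3, hσc, hσs, deriv_const']
    linear_combination (-4 * (deriv ρ τ) ^ 2 * Real.sinh (ρ τ) ^ 2
        - 4 * (deriv t τ) ^ 2 * Real.cosh (ρ τ) ^ 2) * Real.sin_sq_add_cos_sq (t τ)
      + (4 * (deriv ρ τ) ^ 2 * Real.cosh (ρ τ) ^ 2 + 4 * Real.sinh (ρ τ) ^ 2)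
          * Real.sin_sq_add_cos_sq σ
      + (4 * (deriv ρ τ) ^ 2) * Real.cosh_sq_sub_sinh_sq (ρ τ)
      + 4 * hVir τ
  · -- induced multiplier
    intro τ σ
    rw [etaForm_eight]
    show -(deriv (fun _ : ℝ => 2 * Real.cosh (ρ τ) * Real.cos (t τ)) σ
          * deriv (fun _ : ℝ => 2 * Real.cosh (ρ τ) * Real.cos (t τ)) σ)
        + deriv (fun _ : ℝ => (0:ℝ)) σ * deriv (fun _ : ℝ => (0:ℝ)) σ
        + deriv (fun _ : ℝ => (0:ℝ)) σ * deriv (fun _ : ℝ => (0:ℝ)) σ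
        + deriv (fun s' => 2 * Real.sinh (ρ τ) * Real.cos s') σ
          * deriv (fun s' => 2 * Real.sinh (ρ τ) * Real.cos s') σ
        + deriv (fun _ : ℝ => (0:ℝ)) σ * deriv (fun _ : ℝ => (0:ℝ)) σ
        + deriv (fun s' => 2 * Real.sinh (ρ τ) * Real.sin s') σ
          * deriv (fun s' => 2 * Real.sinh (ρ τ) * Real.sin s') σ
        + deriv (fun _ : ℝ => (0:ℝ)) σ * deriv (fun _ : ℝ => (0:ℝ)) σ
        - deriv (fun _ : ℝ => 2 * Real.cosh (ρ τ) * Real.sin (t τ)) σ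
          * deriv (fun _ : ℝ => 2 * Real.cosh (ρ τ) * Real.sin (t τ)) σ
      = 4 * Real.sinh (ρ τ) ^ 2
    simp only [hσc, hσs, deriv_const']
    linear_combination (4 * Real.sinh (ρ τ) ^ 2) * Real.sin_sq_add_cos_sq σ
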